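/- Timestamp criterion for linearizability (sufficiency, abstract form): Let Ops be a finite set of operations, each either a Write or a Read, with a strict interval-order precedence ≺ and a value val(op). Suppose there is a function ts from operations to rationals such that (Uniqueness) distinct Writes have distinct timestamps, (Integrity) for each Read r there is a Write w with ts(w) = ts(r), val(w) = val(r), and ¬(r ≺ w), and (Precedence) op1 ≺ op2 implies ts(op1) ≤ ts(op2). Further suppose there is an initial Write preceding all other operations. Then there exists a linear extension of ≺ on Ops in which every Read returns the value of the last Write preceding it in the linear order. -/

import Mathlib

/-- Timestamp criterion for linearizability (sufficiency, abstract form).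
`isW op = true` means `op` is a Write, `isW op = false` a Read. -/
theorem timestamp_linearizability {Op V : Type*} [Fintype Op]
    (isW : Op → Bool) (val : Op → V) (prec : Op → Op → Prop) (ts : Op → ℚ)
    (w0 : Op)
    (hirr : ∀ a, ¬ prec a a)
    (htrans : ∀ a b c, prec a b → prec b c → prec a c)
    (hinterval : ∀ a b c d, prec a b → prec c d → ¬ prec c b → prec a d)
    (huniq : ∀ a b, isW a = true → isW b = true → a ≠ b → ts a ≠ ts b)
    (hint : ∀ r, isW r = false →
      ∃ w, isW w = true ∧ ts w = ts r ∧ val w = val r ∧ ¬ prec r w)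
    (hprec : ∀ a b, prec a b → ts a ≤ ts b)
    (hw0 : isW w0 = true) (hw0first : ∀ op, op ≠ w0 → prec w0 op) :
    ∃ lt : Op → Op → Prop, IsStrictTotalOrder Op lt ∧
      (∀ a b, prec a b → lt a b) ∧
      (∀ r, isW r = false → ∃ w, isW w = true ∧ lt w r ∧ val w = val r ∧
        ∀ w', isW w' = true → lt w' r → ¬ lt w w') := by
  classical
  -- tag: writes get 0, reads get 1
  set tag : Op → ℕ := fun a => if isW a then 0 else 1 with htag
  -- rank in prec
  set g : Op → ℕ := fun a => (Finset.univ.filter (fun x => prec x a)).card with hg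
  -- arbitrary injection into ℕ
  obtain ⟨idx, hidx⟩ : ∃ f : Op → ℕ, Function.Injective f :=
    ⟨fun a => (Fintype.equivFin Op a : ℕ), fun a b h => by
      apply (Fintype.equivFin Op).injective; exact Fin.val_injective h⟩
  set k : Op → ℚ ×ₗ (ℕ ×ₗ (ℕ ×ₗ ℕ)) :=
    fun a => toLex (ts a, toLex (tag a, toLex (g a, idx a))) with hk
  have kinj : Function.Injective k := by
    intro a b h
    simp only [hk, toLex_inj, Prod.mk.injEq] at h
    exact hidx h.2.2.2
  have gmono : ∀ a b, prec a b → g a < g b := by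
    intro a b hab
    apply Finset.card_lt_card
    constructor
    · intro x hx
      simp only [Finset.mem_filter, Finset.mem_univ, true_and] at hx ⊢
      exact htrans x a b hx hab
    · intro hsub
      have : a ∈ Finset.univ.filter (fun x => prec x b) := by
        simp [hab]
      have := hsub this
      simp only [Finset.mem_filter, Finset.mem_univ, true_and] at this
      exact hirr a this
  -- characterization of the lex order
  have klt : ∀ a b, k a < k b ↔ ts a < ts b ∨ (ts a = ts b ∧ (tag a < tag b ∨
      (tag a = tag b ∧ (g a < g b ∨ (g a = g b ∧ idx a < idx b))))) := by
    intro a b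
    simp only [hk, Prod.Lex.lt_iff, ofLex_toLex]
  -- prec implies k-order
  have hext : ∀ a b, prec a b → k a < k b := by
    intro a b hab
    rcases lt_or_eq_of_le (hprec a b hab) with h | h
    · exact (klt a b).2 (Or.inl h)
    · refine (klt a b).2 (Or.inr ⟨h, ?_⟩)
      have hne : a ≠ b := fun e => hirr a (e ▸ hab)
      cases ha : isW a <;> cases hb : isW b
      · -- both reads
        exact Or.inr ⟨by simp [htag, ha, hb], Or.inl (gmono a b hab)⟩
      · -- a read, b write : contradiction via integrity
        exfalso
        obtain ⟨w, hw, hwts, _, hnp⟩ := hint a ha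
        have : w = b := by
          by_contra hne'
          exact huniq w b hw hb hne' (by rw [hwts, h])
        exact hnp (this ▸ hab)
      · -- a write, b read
        exact Or.inl (by simp [htag, ha, hb])
      · -- both writes: contradiction with uniqueness
        exact absurd h (huniq a b ha hb hne)
  have htri : IsTrichotomous Op (fun a b => k a < k b) := ⟨by
    intro a b
    rcases lt_trichotomy (k a) (k b) with h | h | h
    · exact fun h1 _ => absurd h h1
    · exact fun _ _ => kinj h
    · exact fun _ h2 => absurd h h2⟩
  have hso : IsStrictOrder Op (fun a b => k a < k b) :=
    { irrefl := fun a => lt_irrefl _,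
      trans := fun a b c => lt_trans }
  refine ⟨fun a b => k a < k b, { }, hext, ?_⟩
  · intro r hr
    obtain ⟨w, hw, hwts, hwval, _⟩ := hint r hr
    refine ⟨w, hw, ?_, hwval, ?_⟩
    · exact (klt w r).2 (Or.inr ⟨hwts, Or.inl (by simp [htag, hw, hr])⟩)
    · intro w' hw' hlt hcon
      by_cases he : w' = w
      · subst he; exact lt_irrefl _ hcon
      · -- ts w' ≤ ts r = ts w, and ts w' ≠ ts w, so ts w' < ts w, contra k w < k w'
        have h1 : ts w' ≤ ts r := by
          rcases (klt w' r).1 hlt with h | ⟨h, _⟩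
          · exact le_of_lt h
          · exact le_of_eq h
        have h2 : ts w' ≠ ts w := fun e => huniq w' w hw' hw he e
        have h3 : ts w' < ts w := lt_of_le_of_ne (hwts ▸ h1) h2
        rcases (klt w w').1 hcon with h | ⟨h, _⟩
        · exact absurd h (lt_asymm h3)
        · exact h2 h.symm
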